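/- Let T be a tree with ℓ leaves and h heavy edges. If T is not a single vertex, then ℓ − h − 1 ≤ P(T) ≤ ℓ − 1. -/

import Mathlib

namespace PaperPC

open SimpleGraph

variable {V : Type*}

/-- The degree of a vertex, via the cardinality of its neighbor set. -/
noncomputable def ndeg (G : SimpleGraph V) (v : V) : ℕ := (G.neighborSet v).ncard

/-- A linear forest: an acyclic graph of maximum degree at most 2,
i.e. a vertex-disjoint union of paths.  A spanning linear subforest of `G`
is exactly a path covering of `G` (isolated vertices are one-vertex paths). -/
def IsLinearForest (H : SimpleGraph V) : Prop :=
  H.IsAcyclic ∧ ∀ v, ndeg H v ≤ 2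

/-- The number of paths of a path covering = number of connected components. -/
noncomputable def numPaths (H : SimpleGraph V) : ℕ := Nat.card H.ConnectedComponent

/-- The path covering number `P(G)`. -/
noncomputable def pathCoverNumber (G : SimpleGraph V) : ℕ :=
  sInf {k | ∃ H ≤ G, IsLinearForest H ∧ numPaths H = k}

/-- `H` is a minimum path covering of `G`. -/
def IsMinPathCover (G H : SimpleGraph V) : Prop :=
  H ≤ G ∧ IsLinearForest H ∧ numPaths H = pathCoverNumber G

open scoped Classical in
/-- The path sequence of a path covering: the multiset of the numbers of vertices
of its paths (a multiset encodes the nondecreasing ordered sequence). -/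
noncomputable def pathSeq [Fintype V] (H : SimpleGraph V) : Multiset ℕ :=
  (Finset.univ : Finset H.ConnectedComponent).val.map fun c => c.supp.ncard

/-- `G` admits a unique path sequence. -/
def UniquePathSequence [Fintype V] (G : SimpleGraph V) : Prop :=
  ∀ H₁ H₂ : SimpleGraph V, IsMinPathCover G H₁ → IsMinPathCover G H₂ →
    pathSeq H₁ = pathSeq H₂

/-- Number of leaves (vertices of degree 1). -/
noncomputable def numLeaves (G : SimpleGraph V) : ℕ := {v | ndeg G v = 1}.ncard

/-- Number of heavy edges (edges both of whose endpoints have degree > 2). -/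
noncomputable def numHeavyEdges (G : SimpleGraph V) : ℕ :=
  {e ∈ G.edgeSet | ∀ v ∈ e, 2 < ndeg G v}.ncard

/-- Number of edges. -/
noncomputable def numEdges (G : SimpleGraph V) : ℕ := G.edgeSet.ncard

/-- A graph is 2-sparse if no two adjacent vertices both have degree > 2. -/
def TwoSparse (G : SimpleGraph V) : Prop :=
  ∀ u v, G.Adj u v → ndeg G u ≤ 2 ∨ ndeg G v ≤ 2

/-- `G` is a path graph. -/
def IsPathGraph (G : SimpleGraph V) : Prop := G.IsTree ∧ ∀ v, ndeg G v ≤ 2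

/-- `G` is a cycle graph. -/
def IsCycleGraph (G : SimpleGraph V) : Prop := G.Connected ∧ ∀ v, ndeg G v = 2

/-- A generalized star: a tree with exactly one heavy vertex (the center) in which
all vines have the same number of vertices (equivalently, all leaves are at the same
distance from the center). -/
def IsGenStar (G : SimpleGraph V) : Prop :=
  G.IsTree ∧ ∃ c k, 2 < ndeg G c ∧ (∀ v, v ≠ c → ndeg G v ≤ 2) ∧
    ∀ v, ndeg G v = 1 → G.dist c v = k

/-- An L(2,1)-labeling. -/
def IsL21Labeling (G : SimpleGraph V) (f : V → ℕ) : Prop :=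
  (∀ u v, G.Adj u v → 2 ≤ Nat.dist (f u) (f v)) ∧
  (∀ u v, G.dist u v = 2 → 1 ≤ Nat.dist (f u) (f v))

/-- `λ(G)`: the least `k` such that `G` has an L(2,1)-labeling with labels in `{0,…,k}`. -/
noncomputable def lambdaNum (G : SimpleGraph V) : ℕ :=
  sInf {k | ∃ f : V → ℕ, IsL21Labeling G f ∧ ∀ v, f v ≤ k}

/-- A λ-labeling: an L(2,1)-labeling with maximum label `λ(G)`. -/
def IsLambdaLabeling (G : SimpleGraph V) (f : V → ℕ) : Prop :=
  IsL21Labeling G f ∧ (∀ v, f v ≤ lambdaNum G) ∧ ∃ v, f v = lambdaNum G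

/-- The set of holes of a labeling: unused labels `h` with `1 ≤ h ≤ λ(G) - 1`. -/
def labHoles (G : SimpleGraph V) (f : V → ℕ) : Set ℕ :=
  {h | 1 ≤ h ∧ h + 1 ≤ lambdaNum G ∧ ∀ v, f v ≠ h}

/-- The hole index `ρ(G)`: minimum number of holes over all λ-labelings. -/
noncomputable def holeIndex (G : SimpleGraph V) : ℕ :=
  sInf {k | ∃ f : V → ℕ, IsLambdaLabeling G f ∧ (labHoles G f).ncard = k}

open scoped Classical in
/-- The island sequence of a labeling: the multiset of cardinalities of the maximal
intervals `[a,b]` of consecutive integers all used by the labeling. -/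
noncomputable def islandSeq [Fintype V] (G : SimpleGraph V) (f : V → ℕ) : Multiset ℕ :=
  (((Finset.range (lambdaNum G + 1)) ×ˢ (Finset.range (lambdaNum G + 1))).filter
    (fun q => q.1 ≤ q.2 ∧ (∀ x ∈ Finset.Icc q.1 q.2, ∃ v, f v = x) ∧
      (q.1 = 0 ∨ ∀ v, f v ≠ q.1 - 1) ∧ ∀ v, f v ≠ q.2 + 1)).val.map
    fun q => q.2 - q.1 + 1

/-- `G` admits (at least) two distinct island sequences. -/
def MultipleIslandSequences [Fintype V] (G : SimpleGraph V) : Prop :=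
  ∃ f g : V → ℕ, IsLambdaLabeling G f ∧ IsLambdaLabeling G g ∧
    (labHoles G f).ncard = holeIndex G ∧ (labHoles G g).ncard = holeIndex G ∧
    islandSeq G f ≠ islandSeq G g

/-- A vine: a maximal path one of whose endpoints (`a`) is a leaf and all of whose
vertices are light.  Maximality: any light vertex adjacent to the other end already
lies on the path. -/
def IsVine (G : SimpleGraph V) {a b : V} (p : G.Walk a b) : Prop :=
  p.IsPath ∧ ndeg G a = 1 ∧ (∀ v ∈ p.support, ndeg G v ≤ 2) ∧
  ∀ c, G.Adj b c → ndeg G c ≤ 2 → c ∈ p.support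

/-- A vine with center `v`: the (heavy) vertex adjacent to the non-leaf end of the vine. -/
def IsVineWithCenter (G : SimpleGraph V) {a b : V} (p : G.Walk a b) (v : V) : Prop :=
  IsVine G p ∧ G.Adj b v ∧ 2 < ndeg G v

/-- The matching number of the subgraph of `G` induced by `S`. -/
noncomputable def matchingNumberOn (G : SimpleGraph V) (S : Set V) : ℕ :=
  sSup {k | ∃ M : Set (Sym2 V), M ⊆ G.edgeSet ∧ (∀ e ∈ M, ∀ v ∈ e, v ∈ S) ∧
    (∀ e ∈ M, ∀ f ∈ M, e ≠ f → ∀ v, v ∈ e → v ∉ f) ∧ M.ncard = k}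

/-- Labels used in the family `F`: `A`, or `B k` where `k` records the number of
vertices of each vine of the labeled generalized star that produced the label. -/
inductive Lab | A | B (k : ℕ)

/-- A labeled generalized star with center `c` whose vines have `k` vertices each
(equivalently, every leaf is at distance `k` from `c`); the degenerate case
`deg c = 2` is the convention regarding a path of length `2k` as a labeled
generalized star with two vines.  The neighbors of the center are labeled `B k`,
the other non-leaf vertices (and the center) are labeled `A`, leaves are unlabeled. -/
def IsLGenStar {W : Type*} (H : SimpleGraph W) (c : W) (k : ℕ)
    (lab : W → Option Lab) : Prop :=
  H.IsTree ∧ 2 ≤ ndeg H c ∧ (∀ v, v ≠ c → ndeg H v ≤ 2) ∧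
  (∀ v, ndeg H v = 1 → H.dist c v = k) ∧
  lab c = some Lab.A ∧
  (∀ v, H.Adj c v → lab v = some (Lab.B k)) ∧
  (∀ v, v ≠ c → ¬H.Adj c v → ndeg H v = 1 → lab v = none) ∧
  (∀ v, v ≠ c → ¬H.Adj c v → 2 ≤ ndeg H v → lab v = some Lab.A)

/-- A labeled path: a path with at least three vertices, non-leaf vertices labeled `A`. -/
def IsLPath {W : Type*} (H : SimpleGraph W) (lab : W → Option Lab) : Prop :=
  H.IsTree ∧ (∀ v, ndeg H v ≤ 2) ∧ 3 ≤ Nat.card W ∧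
  (∀ v, ndeg H v = 1 → lab v = none) ∧
  ∀ v, 2 ≤ ndeg H v → lab v = some Lab.A

/-- The induced subgraph of `T` on `s` is a labeled generalized star. -/
def LGenStarOn (T : SimpleGraph V) (s : Set V) (c : V) (k : ℕ)
    (lab : V → Option Lab) : Prop :=
  ∃ hc : c ∈ s, IsLGenStar (T.induce s) ⟨c, hc⟩ k fun v => lab v.1

/-- The induced subgraph of `T` on `s` is a labeled path. -/
def LPathOn (T : SimpleGraph V) (s : Set V) (lab : V → Option Lab) : Prop :=
  IsLPath (T.induce s) fun v => lab v.1

/-- The family `F` of labeled trees, realized as induced subgraphs (on vertex sets `s`)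
of an ambient graph `T`:  start from a labeled generalized star with at least three
vines or from a labeled path, and repeatedly attach, via a single new edge, a labeled
generalized star with at least three vines at a vertex labeled `A` (Type-1), a labeled
path by one of its non-leaf vertices at a vertex labeled `A` (Type-2), or a labeled
generalized star whose vines have the same number of vertices `k` as those of the star
that labeled `u` with `B k`, at a vertex `u` labeled `B k` (Type-3). -/
inductive InF (T : SimpleGraph V) : Set V → (V → Option Lab) → Prop
  | base_star (s : Set V) (c : V) (k : ℕ) (lab : V → Option Lab) :
      LGenStarOn T s c k lab → 3 ≤ {w ∈ s | T.Adj c w}.ncard → InF T s lab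
  | base_path (s : Set V) (lab : V → Option Lab) :
      LPathOn T s lab → InF T s lab
  | type1 (s : Set V) (lab : V → Option Lab) (t : Set V) (lab' : V → Option Lab)
      (u c : V) (k : ℕ) :
      InF T s lab → Disjoint s t → u ∈ s → c ∈ t → lab u = some Lab.A →
      LGenStarOn T t c k lab' → 3 ≤ {w ∈ t | T.Adj c w}.ncard →
      (∀ x ∈ s, ∀ y ∈ t, (T.Adj x y ↔ x = u ∧ y = c)) →
      (∀ x ∈ s, lab' x = lab x) →
      InF T (s ∪ t) lab'
  | type2 (s : Set V) (lab : V → Option Lab) (t : Set V) (lab' : V → Option Lab)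
      (u v : V) :
      InF T s lab → Disjoint s t → u ∈ s → v ∈ t → lab u = some Lab.A →
      LPathOn T t lab' → 2 ≤ {w ∈ t | T.Adj v w}.ncard →
      (∀ x ∈ s, ∀ y ∈ t, (T.Adj x y ↔ x = u ∧ y = v)) →
      (∀ x ∈ s, lab' x = lab x) →
      InF T (s ∪ t) lab'
  | type3 (s : Set V) (lab : V → Option Lab) (t : Set V) (lab' : V → Option Lab)
      (u c : V) (k : ℕ) :
      InF T s lab → Disjoint s t → u ∈ s → c ∈ t → lab u = some (Lab.B k) →
      LGenStarOn T t c k lab' →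
      (∀ x ∈ s, ∀ y ∈ t, (T.Adj x y ↔ x = u ∧ y = c)) →
      (∀ x ∈ s, lab' x = lab x) →
      InF T (s ∪ t) lab'

/-- `G` is obtained from the tree `T` by expanding each edge of `T` into a complete
graph of arbitrary order: there is an embedding `ι` of the vertices of `T` and an
assignment `b` of a block of vertices of `G` to each edge of `T` such that an original
vertex lies in the block of an edge iff it is an endpoint of that edge, blocks of
distinct edges meet only in original vertices, every vertex of `G` lies in some block,
and two distinct vertices of `G` are adjacent iff they lie in a common block. -/
def IsBlockExpansion {U W : Type*} (T : SimpleGraph U) (G : SimpleGraph W) : Prop :=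
  ∃ (ι : U ↪ W) (b : Sym2 U → Set W),
    (∀ (u : U), ∀ e ∈ T.edgeSet, (ι u ∈ b e ↔ u ∈ e)) ∧
    (∀ e ∈ T.edgeSet, ∀ f ∈ T.edgeSet, e ≠ f → b e ∩ b f ⊆ Set.range ι) ∧
    (∀ w : W, ∃ e ∈ T.edgeSet, w ∈ b e) ∧
    (∀ x y : W, G.Adj x y ↔ x ≠ y ∧ ∃ e ∈ T.edgeSet, x ∈ b e ∧ y ∈ b e)

section Aux

private lemma ndeg_eq_degree [Fintype V] (G : SimpleGraph V) [DecidableRel G.Adj] (v : V) :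
    ndeg G v = G.degree v := by
  rw [ndeg, ← card_neighborFinset_eq_degree, neighborFinset_def, Set.ncard_eq_toFinset_card']

private lemma ncard_edgeSet [Fintype V] (G : SimpleGraph V) [Fintype G.edgeSet] :
    G.edgeSet.ncard = G.edgeFinset.card := by
  rw [← coe_edgeFinset, Set.ncard_coe_finset]

private lemma acyclic_mono {G H : SimpleGraph V} (h : H ≤ G) (hG : G.IsAcyclic) : H.IsAcyclic := by
  intro v p hp
  exact hG (p.mapLe h) (hp.mapLe h)

private lemma reach_split {H : SimpleGraph V} (a b : V) {u v : V} (p : H.Walk u v) :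
    (H.deleteEdges {s(a,b)}).Reachable u a ∨ (H.deleteEdges {s(a,b)}).Reachable u b ∨
      (H.deleteEdges {s(a,b)}).Reachable u v := by
  induction p with
  | nil => exact Or.inr (Or.inr (Reachable.refl _))
  | @cons x y z h q ih =>
    by_cases he : s(x,y) = s(a,b)
    · rw [Sym2.eq_iff] at he
      rcases he with ⟨rfl, rfl⟩ | ⟨rfl, rfl⟩
      · exact Or.inl (Reachable.refl _)
      · exact Or.inr (Or.inl (Reachable.refl _))
    · have hadj : (H.deleteEdges {s(a,b)}).Adj x y := by
        rw [deleteEdges_adj]; exact ⟨h, by simpa using he⟩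
      rcases ih with h1 | h1 | h1
      · exact Or.inl (hadj.reachable.trans h1)
      · exact Or.inr (Or.inl (hadj.reachable.trans h1))
      · exact Or.inr (Or.inr (hadj.reachable.trans h1))

private lemma comp_count [Fintype V] :
    ∀ (m : ℕ) (H : SimpleGraph V), H.edgeSet.ncard = m → H.IsAcyclic →
      Nat.card H.ConnectedComponent + H.edgeSet.ncard = Fintype.card V := by
  intro m
  induction m with
  | zero =>
    intro H hm _
    have hempty : H.edgeSet = ∅ := (Set.ncard_eq_zero H.edgeSet.toFinite).mp hm
    have hbot : H = ⊥ := edgeSet_eq_empty.mp hempty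
    subst hbot
    rw [hempty]
    simp only [Set.ncard_empty, add_zero]
    rw [← Nat.card_eq_fintype_card]
    exact (Nat.card_eq_of_bijective ((⊥ : SimpleGraph V).connectedComponentMk)
      ⟨fun u v h => reachable_bot.mp (ConnectedComponent.exact h),
       fun c => c.exists_rep⟩).symm
  | succ m ih =>
    intro H hm hac
    obtain ⟨e, he⟩ : H.edgeSet.Nonempty := by
      rw [← Set.ncard_pos H.edgeSet.toFinite, hm]; omega
    induction e using Sym2.ind with
    | _ a b =>
    have hab : H.Adj a b := he
    set H' := H.deleteEdges {s(a,b)} with hH'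
    have hle : H' ≤ H := deleteEdges_le _
    have hES : H'.edgeSet = H.edgeSet \ {s(a,b)} := edgeSet_deleteEdges _
    have hm' : H'.edgeSet.ncard = m := by
      rw [hES, Set.ncard_diff_singleton_of_mem he, hm]
      omega
    have hac' : H'.IsAcyclic := acyclic_mono hle hac
    have hnr : ¬ H'.Reachable a b := by
      have hbr := (isAcyclic_iff_forall_adj_isBridge.mp hac) hab
      exact hbr
    classical
    have : Fintype H.ConnectedComponent := Fintype.ofFinite _
    have : Fintype H'.ConnectedComponent := Fintype.ofFinite _
    set φ : H'.ConnectedComponent → H.ConnectedComponent :=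
      ConnectedComponent.map (Hom.ofLE hle) with hφ
    have hφmk : ∀ v : V, φ (H'.connectedComponentMk v) = H.connectedComponentMk v := by
      intro v; rfl
    have key : ∀ u v : V, H.Reachable u v →
        H'.Reachable u a ∨ H'.Reachable u b ∨ H'.Reachable u v := by
      intro u v h; exact reach_split a b h.some
    have keyne : ∀ u w : V, H.Reachable u w →
        H.connectedComponentMk w ≠ H.connectedComponentMk a → H'.Reachable u w := by
      intro u w hr hne
      rcases key u w hr with h1 | h1 | h1
      · exact absurd (ConnectedComponent.sound (hr.symm.trans (h1.mono hle))) hne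
      · exact absurd (ConnectedComponent.sound
          (hr.symm.trans ((h1.mono hle).trans hab.symm.reachable))) hne
      · exact h1
    have hfib : ∀ c : H.ConnectedComponent,
        (Finset.univ.filter fun c' => φ c' = c).card =
          if c = H.connectedComponentMk a then 2 else 1 := by
      intro c
      induction c using ConnectedComponent.ind with
      | _ w =>
      by_cases hc : H.connectedComponentMk w = H.connectedComponentMk a
      · rw [if_pos hc, hc]
        have hset : (Finset.univ.filter fun c' => φ c' = H.connectedComponentMk a) =
            {H'.connectedComponentMk a, H'.connectedComponentMk b} := by
          ext c'
          induction c' using ConnectedComponent.ind with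
          | _ u =>
          simp only [Finset.mem_filter, Finset.mem_univ, true_and, hφmk,
            Finset.mem_insert, Finset.mem_singleton, ConnectedComponent.eq]
          constructor
          · intro hra
            rcases key u a hra with h1 | h1 | h1
            · exact Or.inl h1
            · exact Or.inr h1
            · exact Or.inl h1
          · rintro (h1 | h1)
            · exact Reachable.mono hle h1
            · exact (Reachable.mono hle h1).trans hab.symm.reachable
        rw [hset]
        rw [Finset.card_insert_of_notMem, Finset.card_singleton]
        simp only [Finset.mem_singleton, ConnectedComponent.eq]
        exact hnr
      · rw [if_neg hc]
        rw [Finset.card_eq_one]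
        refine ⟨H'.connectedComponentMk w, ?_⟩
        ext c'
        induction c' using ConnectedComponent.ind with
        | _ u =>
        simp only [Finset.mem_filter, Finset.mem_univ, true_and, hφmk,
          Finset.mem_singleton, ConnectedComponent.eq]
        constructor
        · intro hra
          exact keyne u w hra hc
        · intro h1
          exact Reachable.mono hle h1
    have hcount : Fintype.card H'.ConnectedComponent = Fintype.card H.ConnectedComponent + 1 := by
      rw [← Finset.card_univ (α := H'.ConnectedComponent),
        Finset.card_eq_sum_card_fiberwise (f := φ) (t := Finset.univ) (fun x _ => Finset.mem_univ _)]
      rw [Finset.sum_congr rfl (fun c _ => hfib c)]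
      have hterm : ∀ c : H.ConnectedComponent, (if c = H.connectedComponentMk a then 2 else 1)
          = (if c = H.connectedComponentMk a then 1 else 0) + 1 := by
        intro c; split <;> rfl
      rw [Finset.sum_congr rfl fun c _ => hterm c, Finset.sum_add_distrib,
        Finset.sum_ite_eq' Finset.univ _ (fun _ => (1:ℕ))]
      simp [Finset.card_univ, add_comm]
    have := ih H' hm' hac'
    rw [Nat.card_eq_fintype_card, hcount, hm'] at this
    rw [Nat.card_eq_fintype_card, hm]
    omega

private lemma numPaths_eq [Fintype V] {T H : SimpleGraph V} (hT : T.IsTree) (hle : H ≤ T)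
    (hac : H.IsAcyclic) : numPaths H = (T.edgeSet \ H.edgeSet).ncard + 1 := by
  classical
  have h1 : Nat.card H.ConnectedComponent + H.edgeSet.ncard = Fintype.card V :=
    comp_count _ H rfl hac
  have h2 : T.edgeSet.ncard + 1 = Fintype.card V := by
    rw [ncard_edgeSet]; exact hT.card_edgeFinset
  have h3 : (T.edgeSet \ H.edgeSet).ncard + H.edgeSet.ncard = T.edgeSet.ncard := by
    rw [Set.ncard_diff (edgeSet_mono hle) (Set.toFinite _)]
    have : H.edgeSet.ncard ≤ T.edgeSet.ncard :=
      Set.ncard_le_ncard (edgeSet_mono hle) T.edgeSet.toFinite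
    omega
  rw [numPaths]
  omega

private lemma mindeg [Fintype V] {T : SimpleGraph V} (hT : T.Connected) (h2 : 2 ≤ Fintype.card V) :
    ∀ v, 1 ≤ ndeg T v := by
  intro v
  obtain ⟨w, hw⟩ := Fintype.exists_ne_of_one_lt_card (by omega) v
  obtain ⟨p⟩ := hT.preconnected v w
  cases p with
  | nil => exact absurd rfl hw.symm
  | cons h q =>
    have hne : (T.neighborSet v).Nonempty := ⟨_, h⟩
    rw [ndeg]
    exact Nat.one_le_iff_ne_zero.mpr (by
      intro h0
      exact hne.ne_empty ((Set.ncard_eq_zero (T.neighborSet v).toFinite).mp h0))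

private lemma heavy_sum [Fintype V] (T : SimpleGraph V) [DecidableRel T.Adj]
    (hT : T.IsTree) (h2 : 2 ≤ Fintype.card V) :
    ∑ v ∈ Finset.univ.filter (fun v => 2 < ndeg T v), ((ndeg T v : ℤ) - 2)
      = (numLeaves T : ℤ) - 2 := by
  classical
  have hdeg1 : ∀ v, 1 ≤ ndeg T v := mindeg hT.isConnected h2
  have hE : T.edgeFinset.card + 1 = Fintype.card V := hT.card_edgeFinset
  have hsumd : (∑ v : V, (ndeg T v : ℤ)) = 2 * (T.edgeFinset.card : ℤ) := by
    have h1 : ∑ v : V, T.degree v = 2 * T.edgeFinset.card := T.sum_degrees_eq_twice_card_edges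
    have heq : (∑ v : V, (ndeg T v : ℤ)) = ((∑ v : V, T.degree v : ℕ) : ℤ) := by
      push_cast
      exact Finset.sum_congr rfl fun v _ => by rw [ndeg_eq_degree]
    rw [heq, h1]; push_cast; ring
  have htot : ∑ v : V, ((ndeg T v : ℤ) - 2) = -2 := by
    rw [Finset.sum_sub_distrib, hsumd, Finset.sum_const]
    have hcV : (Fintype.card V : ℤ) = (T.edgeFinset.card : ℤ) + 1 := by exact_mod_cast hE.symm
    simp only [Finset.card_univ, nsmul_eq_mul, mul_comm]
    rw [hcV]; ring
  have hsplit := Finset.sum_filter_add_sum_filter_not Finset.univ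
    (fun v => 2 < ndeg T v) (fun v => (ndeg T v : ℤ) - 2)
  have hleaf : numLeaves T = (Finset.univ.filter fun v => ndeg T v = 1).card := by
    rw [numLeaves, Set.ncard_eq_toFinset_card', Set.toFinset_setOf]
  have hlight : ∑ v ∈ Finset.univ.filter (fun v => ¬ 2 < ndeg T v), ((ndeg T v : ℤ) - 2)
      = -(numLeaves T : ℤ) := by
    have hcongr : ∀ v ∈ Finset.univ.filter (fun v => ¬ 2 < ndeg T v),
        ((ndeg T v : ℤ) - 2) = (if ndeg T v = 1 then (-1 : ℤ) else 0) := by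
      intro v hv
      rw [Finset.mem_filter] at hv
      have h1 := hdeg1 v
      have hc : ndeg T v = 1 ∨ ndeg T v = 2 := by omega
      rcases hc with h | h <;> simp [h]
    rw [Finset.sum_congr rfl hcongr, Finset.sum_ite, Finset.sum_const, Finset.sum_const,
      Finset.filter_filter, Finset.filter_filter]
    have hff : (Finset.univ.filter fun v => ¬ 2 < ndeg T v ∧ ndeg T v = 1)
        = Finset.univ.filter fun v => ndeg T v = 1 := by
      ext v; simp only [Finset.mem_filter, Finset.mem_univ, true_and]; omega
    rw [hff, hleaf]
    simp
  rw [hlight] at hsplit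
  rw [htot] at hsplit
  linarith

private lemma dart_bound [Fintype V] (T D : SimpleGraph V) [DecidableRel T.Adj] [DecidableRel D.Adj]
    (hle : D ≤ T) :
    ∑ v ∈ Finset.univ.filter (fun v => 2 < ndeg T v), (ndeg D v : ℕ)
      ≤ D.edgeSet.ncard + numHeavyEdges T := by
  classical
  rw [ncard_edgeSet D]
  set Heavy := Finset.univ.filter (fun v => 2 < ndeg T v) with hHeavy
  set DF : Finset D.Dart := Finset.univ.filter (fun d : D.Dart => 2 < ndeg T d.fst) with hDF
  have ha : ∑ v ∈ Heavy, ndeg D v = DF.card := by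
    rw [Finset.card_eq_sum_card_fiberwise (f := fun d : D.Dart => d.fst) (t := Heavy)
      (fun d hd => by
        rw [hDF, Finset.mem_coe, Finset.mem_filter] at hd
        rw [hHeavy, Finset.mem_coe, Finset.mem_filter]
        exact ⟨Finset.mem_univ _, hd.2⟩)]
    refine Finset.sum_congr rfl fun v hv => ?_
    rw [hHeavy, Finset.mem_filter] at hv
    have hft : DF.filter (fun d => d.fst = v) = Finset.univ.filter (fun d : D.Dart => d.fst = v) := by
      ext d
      simp only [hDF, Finset.filter_filter, Finset.mem_filter, Finset.mem_univ, true_and]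
      constructor
      · exact fun h => h.2
      · intro h; exact ⟨by rw [h]; exact hv.2, h⟩
    rw [hft, D.dart_fst_fiber_card_eq_degree, ndeg_eq_degree]
  have hb : DF.card = ∑ e ∈ D.edgeFinset, (DF.filter (fun d => d.edge = e)).card :=
    Finset.card_eq_sum_card_fiberwise (fun d _ => mem_edgeFinset.mpr d.edge_mem)
  have hc : ∀ e ∈ D.edgeFinset, (DF.filter (fun d => d.edge = e)).card
      ≤ if (∀ v ∈ e, 2 < ndeg T v) then 2 else 1 := by
    intro e he
    split
    · calc (DF.filter (fun d => d.edge = e)).card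
          ≤ (Finset.univ.filter (fun d : D.Dart => d.edge = e)).card := by
            apply Finset.card_le_card
            intro d hd
            rw [hDF, Finset.filter_filter, Finset.mem_filter] at hd
            rw [Finset.mem_filter]
            exact ⟨Finset.mem_univ _, hd.2.2⟩
        _ = 2 := D.dart_edge_fiber_card e (mem_edgeFinset.mp he)
    · next hne =>
      rw [Finset.card_le_one]
      intro d1 h1 d2 h2
      rw [hDF, Finset.filter_filter, Finset.mem_filter] at h1 h2
      have hee : d1.edge = d2.edge := by rw [h1.2.2, h2.2.2]
      rcases (dart_edge_eq_iff d1 d2).mp hee with h | h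
      · exact h
      · exfalso
        apply hne
        intro v hv
        have he2 : e = s(d2.fst, d2.snd) := by rw [← h2.2.2]; rfl
        rw [he2, Sym2.mem_iff] at hv
        have hfst1 : d1.fst = d2.snd := by rw [h]; rfl
        rcases hv with rfl | rfl
        · exact h2.2.1
        · rw [← hfst1]; exact h1.2.1
  have hd : ∑ e ∈ D.edgeFinset, (if (∀ v ∈ e, 2 < ndeg T v) then 2 else 1)
      ≤ D.edgeFinset.card + numHeavyEdges T := by
    rw [Finset.sum_ite, Finset.sum_const, Finset.sum_const]
    simp only [smul_eq_mul, mul_one]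
    have hsplit := Finset.card_filter_add_card_filter_not
      (s := D.edgeFinset) (p := fun e => ∀ v ∈ e, 2 < ndeg T v)
    have hsub : (D.edgeFinset.filter (fun e => ∀ v ∈ e, 2 < ndeg T v)).card
        ≤ numHeavyEdges T := by
      rw [numHeavyEdges, ← Set.ncard_coe_finset]
      apply Set.ncard_le_ncard _ (Set.toFinite _)
      intro e he
      simp only [Finset.coe_filter, Set.mem_setOf_eq, mem_edgeFinset] at he
      exact ⟨edgeSet_mono hle he.1, he.2⟩
    omega
  calc ∑ v ∈ Heavy, ndeg D v = DF.card := ha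
    _ = _ := hb
    _ ≤ ∑ e ∈ D.edgeFinset, (if (∀ v ∈ e, 2 < ndeg T v) then 2 else 1) := Finset.sum_le_sum hc
    _ ≤ _ := hd

end Aux

private lemma pc_lower [Fintype V] {T H : SimpleGraph V} (hT : T.IsTree) (h2 : 2 ≤ Fintype.card V)
    (hle : H ≤ T) (hacH : H.IsAcyclic) (hdegH : ∀ v, ndeg H v ≤ 2) :
    (numLeaves T : ℤ) - numHeavyEdges T - 1 ≤ numPaths H := by
  classical
  set D := T \ H with hD
  have hDle : D ≤ T := sdiff_le
  have hsub : ∀ v, ndeg T v ≤ ndeg H v + ndeg D v := by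
    intro v
    have hsubset : T.neighborSet v ⊆ H.neighborSet v ∪ D.neighborSet v := by
      intro w hw
      by_cases h : H.Adj v w
      · exact Or.inl h
      · exact Or.inr ((T.sdiff_adj H v w).mpr ⟨hw, h⟩)
    calc ndeg T v ≤ (H.neighborSet v ∪ D.neighborSet v).ncard :=
        Set.ncard_le_ncard hsubset (Set.toFinite _)
      _ ≤ ndeg H v + ndeg D v := Set.ncard_union_le _ _
  have hHS := heavy_sum T hT h2
  have hterm : ∀ v ∈ Finset.univ.filter (fun v => 2 < ndeg T v),
      ((ndeg T v : ℤ) - 2) ≤ (ndeg D v : ℤ) := by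
    intro v _
    have h1 := hsub v
    have h2 := hdegH v
    omega
  have hsum1 : (numLeaves T : ℤ) - 2
      ≤ ∑ v ∈ Finset.univ.filter (fun v => 2 < ndeg T v), (ndeg D v : ℤ) := by
    rw [← hHS]; exact Finset.sum_le_sum hterm
  have hDB := dart_bound T D hDle
  have hDB' : (∑ v ∈ Finset.univ.filter (fun v => 2 < ndeg T v), (ndeg D v : ℤ))
      ≤ (D.edgeSet.ncard : ℤ) + (numHeavyEdges T : ℤ) := by
    have : ((∑ v ∈ Finset.univ.filter (fun v => 2 < ndeg T v), ndeg D v : ℕ) : ℤ)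
        ≤ ((D.edgeSet.ncard + numHeavyEdges T : ℕ) : ℤ) := by exact_mod_cast hDB
    push_cast at this ⊢
    exact this
  have hedges : T.edgeSet \ H.edgeSet = D.edgeSet := (T.edgeSet_sdiff H).symm
  have hnp : numPaths H = D.edgeSet.ncard + 1 := by
    rw [numPaths_eq hT hle hacH, hedges]
  have : (numPaths H : ℤ) = (D.edgeSet.ncard : ℤ) + 1 := by
    rw [hnp]; push_cast; ring
  linarith

private lemma pc_upper [Fintype V] {T : SimpleGraph V} (hT : T.IsTree) (h2 : 2 ≤ Fintype.card V) :
    ∃ H ≤ T, (H.IsAcyclic ∧ ∀ v, ndeg H v ≤ 2) ∧ (numPaths H : ℤ) ≤ (numLeaves T : ℤ) - 1 := by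
  classical
  have hch : ∀ v : V, ∃ c : Finset V, c ⊆ T.neighborFinset v ∧ c.card = ndeg T v - 2 := by
    intro v
    apply Finset.exists_subset_card_eq
    rw [card_neighborFinset_eq_degree, ← ndeg_eq_degree]
    omega
  choose cut hcut1 hcut2 using hch
  set Heavy := Finset.univ.filter (fun v => 2 < ndeg T v) with hHeavy
  set Dfin : Finset (Sym2 V) := Heavy.biUnion (fun v => (cut v).image (fun w => s(v,w)))
    with hDfin
  set H := T.deleteEdges ↑Dfin with hH
  have hle : H ≤ T := deleteEdges_le _
  have hnbr : ∀ v w, H.Adj v w ↔ T.Adj v w ∧ s(v,w) ∉ (↑Dfin : Set (Sym2 V)) := by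
    intro v w; rw [hH, deleteEdges_adj]
  have hdeg : ∀ v, ndeg H v ≤ 2 := by
    intro v
    by_cases hv : 2 < ndeg T v
    · have hsubset : H.neighborSet v ⊆ ↑(T.neighborFinset v \ cut v) := by
        intro w hw
        have hw' := (hnbr v w).mp hw
        simp only [Finset.coe_sdiff, Set.mem_diff, Finset.mem_coe, mem_neighborFinset]
        refine ⟨hw'.1, fun hmem => hw'.2 ?_⟩
        rw [hDfin]
        simp only [Finset.coe_biUnion, Finset.mem_coe, Set.mem_iUnion]
        exact ⟨v, by rw [hHeavy]; simp [hv], Finset.mem_image_of_mem _ hmem⟩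
      calc ndeg H v ≤ (↑(T.neighborFinset v \ cut v) : Set V).ncard :=
            Set.ncard_le_ncard hsubset (Set.toFinite _)
        _ = (T.neighborFinset v \ cut v).card := Set.ncard_coe_finset _
        _ ≤ 2 := by
            rw [Finset.card_sdiff_of_subset (hcut1 v), hcut2, card_neighborFinset_eq_degree,
              ← ndeg_eq_degree]
            omega
    · have hsubset : H.neighborSet v ⊆ T.neighborSet v := fun w hw => ((hnbr v w).mp hw).1
      calc ndeg H v ≤ ndeg T v := Set.ncard_le_ncard hsubset (Set.toFinite _)
        _ ≤ 2 := by omega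
  have hac : H.IsAcyclic := acyclic_mono hle hT.IsAcyclic
  refine ⟨H, hle, ⟨hac, hdeg⟩, ?_⟩
  have hcardD : (Dfin.card : ℤ) ≤ (numLeaves T : ℤ) - 2 := by
    have h1 : Dfin.card ≤ ∑ v ∈ Heavy, (cut v).card := by
      calc Dfin.card ≤ ∑ v ∈ Heavy, ((cut v).image fun w => s(v,w)).card :=
            Finset.card_biUnion_le
        _ ≤ ∑ v ∈ Heavy, (cut v).card := Finset.sum_le_sum fun v _ => Finset.card_image_le
    have h2' : (∑ v ∈ Heavy, ((cut v).card : ℤ)) = (numLeaves T : ℤ) - 2 := by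
      rw [← heavy_sum T hT h2]
      refine Finset.sum_congr rfl fun v hv => ?_
      rw [Finset.mem_filter] at hv
      have h2le : 2 ≤ ndeg T v := by omega
      rw [hcut2 v, Nat.cast_sub h2le]
      push_cast
      ring
    calc (Dfin.card : ℤ) ≤ ((∑ v ∈ Heavy, (cut v).card : ℕ) : ℤ) := by exact_mod_cast h1
      _ = ∑ v ∈ Heavy, ((cut v).card : ℤ) := by push_cast; rfl
      _ = (numLeaves T : ℤ) - 2 := h2'
  have hnp : numPaths H = (T.edgeSet \ H.edgeSet).ncard + 1 := numPaths_eq hT hle hac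
  have hdiff : T.edgeSet \ H.edgeSet ⊆ ↑Dfin := by
    intro e he
    have hE : H.edgeSet = T.edgeSet \ ↑Dfin := T.edgeSet_deleteEdges _
    rw [hE] at he
    simp only [Set.mem_diff] at he
    by_contra hmem
    exact he.2 ⟨he.1, hmem⟩
  have hle2 : (T.edgeSet \ H.edgeSet).ncard ≤ Dfin.card := by
    rw [← Set.ncard_coe_finset Dfin]
    exact Set.ncard_le_ncard hdiff (Set.toFinite _)
  have : (numPaths H : ℤ) ≤ (Dfin.card : ℤ) + 1 := by
    rw [hnp]
    push_cast
    omega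
  linarith

/-- **Theorem (Statement 0).** Let `T` be a tree with `ℓ` leaves and `h` heavy edges.
If `T` is not a single vertex, then `ℓ − h − 1 ≤ P(T) ≤ ℓ − 1`. -/
theorem tree_pathCoverNumber_bounds {V : Type*} [Fintype V] (T : SimpleGraph V)
    (hT : T.IsTree) (h1 : Fintype.card V ≠ 1) :
    (numLeaves T : ℤ) - numHeavyEdges T - 1 ≤ pathCoverNumber T ∧
    (pathCoverNumber T : ℤ) ≤ numLeaves T - 1 := by
  classical
  have hV : Nonempty V := hT.isConnected.nonempty
  have h2 : 2 ≤ Fintype.card V := by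
    have := Fintype.card_pos_iff.mpr hV
    omega
  have hSne : {k | ∃ H ≤ T, IsLinearForest H ∧ numPaths H = k}.Nonempty := by
    refine ⟨numPaths (⊥ : SimpleGraph V), ⊥, bot_le, ⟨?_, ?_⟩, rfl⟩
    · exact isAcyclic_bot
    · intro v
      have hbot : (⊥ : SimpleGraph V).neighborSet v = ∅ := by ext w; simp
      rw [ndeg, hbot, Set.ncard_empty]
      omega
  constructor
  · obtain ⟨H₀, hle₀, ⟨hac₀, hdeg₀⟩, heq₀⟩ := Nat.sInf_mem hSne
    rw [pathCoverNumber, ← heq₀]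
    exact pc_lower hT h2 hle₀ hac₀ hdeg₀
  · obtain ⟨H₁, hle₁, ⟨hac₁, hdeg₁⟩, hval⟩ := pc_upper hT h2
    have hmem : numPaths H₁ ∈ {k | ∃ H ≤ T, IsLinearForest H ∧ numPaths H = k} :=
      ⟨H₁, hle₁, ⟨hac₁, hdeg₁⟩, rfl⟩
    have hsinf : pathCoverNumber T ≤ numPaths H₁ := Nat.sInf_le hmem
    calc (pathCoverNumber T : ℤ) ≤ (numPaths H₁ : ℤ) := by exact_mod_cast hsinf
      _ ≤ (numLeaves T : ℤ) - 1 := hval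

end PaperPC
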